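/- For every α with 0 < α < 1 there exists a sequence of positive integers (n_k) with n_k / ((cα)^{1/k}·(k/e)²·k^{3/(2k)}) → 1 as k → ∞, where c = 2π/e^{1+e²/2}, and a k_0 such that for all k ≥ k_0, the number of k-tournaments on the vertex set {1, …, n_k} that have Property O is at most α·(k!)^{C(n_k,k)} (equivalently, at least a (1−α) fraction of all k-tournaments on n_k vertices fail to have Property O). -/

import Mathlib

/-- An ordered `k`-set (`k`-tuple of distinct elements of `V`), given as an
embedding `Fin k ↪ V`, is *consistent* with a (strict) linear order `r` on `V`
if its entries are increasing with respect to `r`. -/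
def Consistent {k : ℕ} {V : Type*} (r : V → V → Prop) (e : Fin k ↪ V) : Prop :=
  ∀ i j : Fin k, i < j → r (e i) (e j)

/-- An *oriented `k`-uniform hypergraph* on `V`: a family of `k`-tuples of
distinct elements of `V` (embeddings `Fin k ↪ V`) such that no two tuples have
the same underlying `k`-element set. -/
structure OrientedHypergraph (k : ℕ) (V : Type*) where
  edges : Finset (Fin k ↪ V)
  eq_of_range_eq : ∀ e ∈ edges, ∀ f ∈ edges, Set.range ⇑e = Set.range ⇑f → e = f

/-- *Property O*: for every linear order (given by its strict order relation `r`)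
on the vertex set, some edge is consistent with it. -/
def PropertyO {k : ℕ} {V : Type*} (H : OrientedHypergraph k V) : Prop :=
  ∀ r : V → V → Prop, IsStrictTotalOrder V r → ∃ e ∈ H.edges, Consistent r e

/-- A *`k`-tournament*: an oriented `k`-uniform hypergraph containing a tuple
for every `k`-element subset of the vertex set (such a tuple is unique by
`eq_of_range_eq`). -/
def IsTournament {k : ℕ} {V : Type*} (H : OrientedHypergraph k V) : Prop :=
  ∀ S : Finset V, S.card = k → ∃ e ∈ H.edges, Set.range ⇑e = ↑S

open Finset Function

section Count

variable {k n : ℕ}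

/-- embeddings with given range S -/
noncomputable def rangeEquiv (S : Finset (Fin n)) (hS : S.card = k) :
    {e : Fin k ↪ Fin n // Set.range ⇑e = ↑S} ≃ (Fin k ↪ {x // x ∈ S}) where
  toFun e := ⟨fun i => ⟨e.1 i, by
      have : (e.1 i : Fin n) ∈ Set.range ⇑e.1 := Set.mem_range_self i
      rw [e.2] at this; exact_mod_cast this⟩,
    fun i j h => e.1.injective (by simpa using congrArg Subtype.val h)⟩
  invFun f := ⟨f.trans (Embedding.subtype _), by
    have hbij : Function.Bijective f := by
      rw [Fintype.bijective_iff_injective_and_card]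
      exact ⟨f.injective, by simp [hS]⟩
    ext x
    constructor
    · rintro ⟨i, rfl⟩; simpa using (f i).2
    · intro hx
      obtain ⟨i, hi⟩ := hbij.2 ⟨x, hx⟩
      exact ⟨i, by simp [Embedding.trans, hi]⟩⟩
  left_inv e := by ext i; rfl
  right_inv f := by ext i; rfl

noncomputable instance : ∀ (S : Finset (Fin n)), Fintype {e : Fin k ↪ Fin n // Set.range ⇑e = ↑S} :=
  fun _ => by classical infer_instance

lemma card_rangeSet (S : Finset (Fin n)) (hS : S.card = k) :
    Fintype.card {e : Fin k ↪ Fin n // Set.range ⇑e = ↑S} = k.factorial := by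
  classical
  rw [Fintype.card_congr (rangeEquiv S hS), Fintype.card_embedding_eq]
  simp [Fintype.card_coe, hS, Nat.descFactorial_self]

end Count

section Count2
variable {k n : ℕ}

noncomputable def edgeOf (H : OrientedHypergraph k (Fin n)) (hT : IsTournament H)
    (S : Finset (Fin n)) (hS : S.card = k) : Fin k ↪ Fin n := (hT S hS).choose

lemma edgeOf_mem (H : OrientedHypergraph k (Fin n)) (hT : IsTournament H)
    (S : Finset (Fin n)) (hS : S.card = k) : edgeOf H hT S hS ∈ H.edges :=
  (hT S hS).choose_spec.1

lemma range_edgeOf (H : OrientedHypergraph k (Fin n)) (hT : IsTournament H)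
    (S : Finset (Fin n)) (hS : S.card = k) : Set.range ⇑(edgeOf H hT S hS) = ↑S :=
  (hT S hS).choose_spec.2

lemma edgeOf_eq (H : OrientedHypergraph k (Fin n)) (hT : IsTournament H)
    (S : Finset (Fin n)) (hS : S.card = k) {e : Fin k ↪ Fin n} (he : e ∈ H.edges)
    (hr : Set.range ⇑e = ↑S) : edgeOf H hT S hS = e :=
  H.eq_of_range_eq _ (edgeOf_mem H hT S hS) _ he (by rw [range_edgeOf H hT S hS, hr])

lemma range_eq_coe_map_univ (e : Fin k ↪ Fin n) :
    Set.range ⇑e = ↑(Finset.univ.map e) := by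
  simp [Finset.coe_map, Set.image_univ]

lemma card_map_univ (e : Fin k ↪ Fin n) : (Finset.univ.map e).card = k := by
  simp

lemma hypergraph_eq_of_edgeOf_eq (H1 H2 : OrientedHypergraph k (Fin n))
    (hT1 : IsTournament H1) (hT2 : IsTournament H2)
    (h : ∀ S hS, edgeOf H1 hT1 S hS = edgeOf H2 hT2 S hS) : H1 = H2 := by
  have key : ∀ (H1 H2 : OrientedHypergraph k (Fin n)) (hT1 : IsTournament H1)
      (hT2 : IsTournament H2),
      (∀ S hS, edgeOf H1 hT1 S hS = edgeOf H2 hT2 S hS) →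
      ∀ e ∈ H1.edges, e ∈ H2.edges := by
    intro H1 H2 hT1 hT2 h e he
    have h1 : edgeOf H1 hT1 (Finset.univ.map e) (card_map_univ e) = e :=
      edgeOf_eq _ _ _ _ he (range_eq_coe_map_univ e)
    have := h (Finset.univ.map e) (card_map_univ e)
    rw [h1] at this
    rw [this]
    exact edgeOf_mem _ _ _ _
  have hedges : H1.edges = H2.edges := by
    ext e
    exact ⟨key H1 H2 hT1 hT2 h e, key H2 H1 hT2 hT1 (fun S hS => (h S hS).symm) e⟩
  cases H1; cases H2; simp_all

lemma exists_mono_edge (H : OrientedHypergraph k (Fin n)) (hT : IsTournament H)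
    (hO : PropertyO H) : ∃ (S : Finset (Fin n)) (hS : S.card = k),
      edgeOf H hT S hS = (S.orderEmbOfFin hS).toEmbedding := by
  obtain ⟨e, he, hc⟩ := hO (· < ·) inferInstance
  have hsm : StrictMono ⇑e := fun i j hij => hc i j hij
  refine ⟨Finset.univ.map e, card_map_univ e, ?_⟩
  rw [edgeOf_eq H hT _ _ he (range_eq_coe_map_univ e)]
  have : ⇑e = ⇑((Finset.univ.map e).orderEmbOfFin (card_map_univ e)) :=
    Finset.orderEmbOfFin_unique _ (fun i => by simp) hsm
  ext i
  simp [← this]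

end Count2

lemma count_main (k n : ℕ) :
    Nat.card {H : OrientedHypergraph k (Fin n) // IsTournament H ∧ PropertyO H}
      ≤ k.factorial ^ (n.choose k) - (k.factorial - 1) ^ (n.choose k) := by
  classical
  set K := {S : Finset (Fin n) // S.card = k} with hK
  let E : K → Type := fun S => {e : Fin k ↪ Fin n // Set.range ⇑e = ↑S.1}
  let m : ∀ S : K, E S := fun S =>
    ⟨(S.1.orderEmbOfFin S.2).toEmbedding, by simp⟩
  let T := {g : ∀ S : K, E S // ∃ S, (g S).1 = (m S).1}
  have cardE : ∀ S : K, Fintype.card (E S) = k.factorial := fun S =>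
    card_rangeSet S.1 S.2
  -- the injection
  let Φ : {H : OrientedHypergraph k (Fin n) // IsTournament H ∧ PropertyO H} → T :=
    fun H => ⟨fun S => ⟨edgeOf H.1 H.2.1 S.1 S.2, range_edgeOf H.1 H.2.1 S.1 S.2⟩, by
      obtain ⟨S, hS, hmono⟩ := exists_mono_edge H.1 H.2.1 H.2.2
      exact ⟨⟨S, hS⟩, hmono⟩⟩
  have hΦ : Function.Injective Φ := by
    intro x y hxy
    apply Subtype.ext
    apply hypergraph_eq_of_edgeOf_eq x.1 y.1 x.2.1 y.2.1
    intro S hS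
    have := congrFun (congrArg Subtype.val hxy) ⟨S, hS⟩
    exact congrArg Subtype.val this
  have step1 : Nat.card {H : OrientedHypergraph k (Fin n) // IsTournament H ∧ PropertyO H}
      ≤ Nat.card T := Nat.card_le_card_of_injective Φ hΦ
  have e1 : T ≃ {g : ∀ S : K, E S // ¬ ∀ S, (g S).1 ≠ (m S).1} :=
    Equiv.subtypeEquivRight (by intro g; push_neg; rfl)
  have e2 : {g : ∀ S : K, E S // ∀ S, (g S).1 ≠ (m S).1} ≃ (∀ S : K, {e : E S // e.1 ≠ (m S).1}) :=
    Equiv.subtypePiEquivPi (p := fun (S : K) (e : E S) => e.1 ≠ (m S).1)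
  have cardNe : ∀ S : K, Fintype.card {e : E S // e.1 ≠ (m S).1} = k.factorial - 1 := by
    intro S
    have e3 : {e : E S // e.1 ≠ (m S).1} ≃ {e : E S // ¬ e = m S} :=
      Equiv.subtypeEquivRight (by intro e; rw [Subtype.ext_iff])
    rw [Fintype.card_congr e3, Fintype.card_subtype_compl, Fintype.card_subtype_eq, cardE S]
  have cardPi : Fintype.card (∀ S : K, E S) = k.factorial ^ (n.choose k) := by
    rw [Fintype.card_pi]
    rw [Finset.prod_congr rfl (fun S _ => cardE S), Finset.prod_const, Finset.card_univ]
    congr 1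
    have := Fintype.card_finset_len (α := Fin n) k
    simp only [Fintype.card_fin] at this
    exact this
  have cardT : Fintype.card T = k.factorial ^ (n.choose k) - (k.factorial - 1) ^ (n.choose k) := by
    rw [Fintype.card_congr e1, Fintype.card_subtype_compl, cardPi, Fintype.card_congr e2,
      Fintype.card_pi, Finset.prod_congr rfl (fun S _ => cardNe S), Finset.prod_const,
      Finset.card_univ]
    congr 2
    have := Fintype.card_finset_len (α := Fin n) k
    simp only [Fintype.card_fin] at this
    exact this
  calc Nat.card {H : OrientedHypergraph k (Fin n) // IsTournament H ∧ PropertyO H}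
      ≤ Nat.card T := step1
    _ = Fintype.card T := Nat.card_eq_fintype_card
    _ = k.factorial ^ (n.choose k) - (k.factorial - 1) ^ (n.choose k) := cardT

open Real Filter

lemma fact_lower (k : ℕ) : ((k:ℝ)/Real.exp 1)^k ≤ (k.factorial : ℝ) := by
  have h := Real.sum_le_exp_of_nonneg (x := (k:ℝ)) (by positivity) (k+1)
  have hterm : ((k:ℝ))^k / (k.factorial : ℝ) ≤ Real.exp k := by
    refine le_trans ?_ h
    exact Finset.single_le_sum (f := fun i => (k:ℝ)^i / (i.factorial : ℝ))
      (fun i _ => by positivity) (Finset.self_mem_range_succ k)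
  have hfpos : (0:ℝ) < (k.factorial : ℝ) := by exact_mod_cast k.factorial_pos
  have hek : Real.exp ((k:ℕ):ℝ) = (Real.exp 1)^k := by
    rw [← Real.exp_nat_mul]; norm_num
  rw [div_pow]
  rw [div_le_iff₀ (by positivity)]
  rw [div_le_iff₀ hfpos] at hterm
  rw [hek] at hterm
  linarith [hterm]

lemma e_pow_succ_le (k : ℕ) : Real.exp 1 * (k:ℝ)^(k+1) ≤ ((k:ℝ)+1)^(k+1) := by
  have h := Real.add_one_le_exp (-(1/((k:ℝ)+1)))
  have hk1 : (0:ℝ) < (k:ℝ)+1 := by positivity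
  have h2 : (k:ℝ)/((k:ℝ)+1) ≤ Real.exp (-(1/((k:ℝ)+1))) := by
    have : -(1/((k:ℝ)+1)) + 1 = (k:ℝ)/((k:ℝ)+1) := by field_simp; ring
    linarith [h, this.symm.le]
  have h3 : ((k:ℝ)/((k:ℝ)+1))^(k+1) ≤ (Real.exp (-(1/((k:ℝ)+1))))^(k+1) :=
    pow_le_pow_left₀ (by positivity) h2 _
  have h4 : (Real.exp (-(1/((k:ℝ)+1))))^(k+1) = Real.exp (-1) := by
    rw [← Real.exp_nat_mul]
    congr 1
    push_cast
    field_simp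
  rw [h4, div_pow] at h3
  rw [div_le_iff₀ (by positivity)] at h3
  have h5 : Real.exp (-1) * ((k:ℝ)+1)^(k+1) * Real.exp 1 = ((k:ℝ)+1)^(k+1) := by
    rw [mul_comm (Real.exp (-1)), mul_assoc, ← Real.exp_add]
    norm_num
  calc Real.exp 1 * (k:ℝ)^(k+1) ≤ Real.exp 1 * (Real.exp (-1) * ((k:ℝ)+1)^(k+1)) := by
        nlinarith [Real.exp_pos 1]
    _ = ((k:ℝ)+1)^(k+1) := by rw [← mul_assoc, mul_comm (Real.exp 1), mul_assoc]; nlinarith [h5]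

lemma fact_upper (k : ℕ) (hk : 1 ≤ k) :
    (k.factorial : ℝ) ≤ Real.exp 1 * k * ((k:ℝ)/Real.exp 1)^k := by
  induction k, hk using Nat.le_induction with
  | base =>
    have h1 : Real.exp 1 * (1:ℕ) * (((1:ℕ):ℝ)/Real.exp 1)^(1:ℕ) = 1 := by
      push_cast; field_simp
    rw [h1]; norm_num [Nat.factorial]
  | succ k hk ih =>
    have hkpos : (0:ℝ) < k := by exact_mod_cast hk
    have epos := Real.exp_pos 1
    have key := e_pow_succ_le k
    have e1 : (0:ℝ) < (Real.exp 1)^k := by positivity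
    have e2 : (0:ℝ) < (Real.exp 1)^(k+1) := by positivity
    have hfact : ((k+1).factorial : ℝ) = ((k:ℝ)+1) * (k.factorial : ℝ) := by
      rw [Nat.factorial_succ]; push_cast; ring
    have step : ((k:ℝ)+1) * (Real.exp 1 * k * ((k:ℝ)/Real.exp 1)^k)
        ≤ Real.exp 1 * ((k:ℝ)+1) * (((k:ℝ)+1)/Real.exp 1)^(k+1) := by
      rw [div_pow, div_pow]
      have lhs : ((k:ℝ)+1) * (Real.exp 1 * k * ((k:ℝ)^k/(Real.exp 1)^k))
          = (((k:ℝ)+1) * (Real.exp 1 * k * (k:ℝ)^k))/(Real.exp 1)^k := by ring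
      have rhs : Real.exp 1 * ((k:ℝ)+1) * (((k:ℝ)+1)^(k+1)/(Real.exp 1)^(k+1))
          = (Real.exp 1 * ((k:ℝ)+1) * ((k:ℝ)+1)^(k+1))/(Real.exp 1)^(k+1) := by ring
      rw [lhs, rhs, div_le_div_iff₀ e1 e2]
      calc ((k:ℝ)+1) * (Real.exp 1 * k * (k:ℝ)^k) * (Real.exp 1)^(k+1)
          = (Real.exp 1 * (k:ℝ)^(k+1)) * (((k:ℝ)+1) * Real.exp 1 * (Real.exp 1)^k) := by ring
        _ ≤ (((k:ℝ)+1)^(k+1)) * (((k:ℝ)+1) * Real.exp 1 * (Real.exp 1)^k) := by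
            apply mul_le_mul_of_nonneg_right key; positivity
        _ = Real.exp 1 * ((k:ℝ)+1) * ((k:ℝ)+1)^(k+1) * (Real.exp 1)^k := by ring
    push_cast
    push_cast at ih
    rw [hfact]
    calc ((k:ℝ)+1) * (k.factorial : ℝ)
        ≤ ((k:ℝ)+1) * (Real.exp 1 * k * ((k:ℝ)/Real.exp 1)^k) :=
          mul_le_mul_of_nonneg_left ih (by positivity)
      _ ≤ Real.exp 1 * ((k:ℝ)+1) * (((k:ℝ)+1)/Real.exp 1)^(k+1) := step

lemma log_fact_lower (k : ℕ) (hk : 1 ≤ k) :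
    (k:ℝ)*(Real.log k - 1) ≤ Real.log (k.factorial : ℝ) := by
  have hkpos : (0:ℝ) < k := by exact_mod_cast hk
  have h1 : (0:ℝ) < ((k:ℝ)/Real.exp 1)^k := by positivity
  have := Real.log_le_log h1 (fact_lower k)
  calc (k:ℝ)*(Real.log k - 1) = Real.log (((k:ℝ)/Real.exp 1)^k) := by
        rw [Real.log_pow, Real.log_div (ne_of_gt hkpos) (ne_of_gt (Real.exp_pos 1)),
          Real.log_exp]
    _ ≤ _ := this

lemma log_fact_upper (k : ℕ) (hk : 1 ≤ k) :
    Real.log (k.factorial : ℝ) ≤ 1 + Real.log k + (k:ℝ)*(Real.log k - 1) := by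
  have hkpos : (0:ℝ) < k := by exact_mod_cast hk
  have hfpos : (0:ℝ) < (k.factorial : ℝ) := by exact_mod_cast k.factorial_pos
  have := Real.log_le_log hfpos (fact_upper k hk)
  calc Real.log (k.factorial : ℝ) ≤ Real.log (Real.exp 1 * k * ((k:ℝ)/Real.exp 1)^k) := this
    _ = 1 + Real.log k + (k:ℝ)*(Real.log k - 1) := by
        rw [Real.log_mul (by positivity) (by positivity),
          Real.log_mul (ne_of_gt (Real.exp_pos 1)) (ne_of_gt hkpos),
          Real.log_pow, Real.log_div (ne_of_gt hkpos) (ne_of_gt (Real.exp_pos 1)),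
          Real.log_exp]

lemma tendsto_log_nat_div : Tendsto (fun k : ℕ => Real.log k / k) atTop (nhds 0) := by
  have h := Real.isLittleO_log_id_atTop.tendsto_div_nhds_zero
  have := h.comp (tendsto_natCast_atTop_atTop (R := ℝ))
  simpa [Function.comp_def] using this

lemma tendsto_texp (α : ℝ) (h0 : 0 < α) :
    Tendsto (fun k : ℕ => Real.log α / k + 2*(Real.log (k.factorial : ℝ)/k - Real.log k + 1))
      atTop (nhds 0) := by
  have h1 : Tendsto (fun k : ℕ => Real.log α / k) atTop (nhds 0) :=
    tendsto_const_div_atTop_nhds_zero_nat _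
  have h2 : Tendsto (fun k : ℕ => Real.log (k.factorial : ℝ)/k - Real.log k + 1) atTop (nhds 0) := by
    apply tendsto_of_tendsto_of_tendsto_of_le_of_le' (g := fun _ : ℕ => (0:ℝ))
      (h := fun k : ℕ => 1/(k:ℝ) + Real.log k / k) tendsto_const_nhds
    · simpa using (tendsto_one_div_atTop_nhds_zero_nat.add tendsto_log_nat_div)
    · filter_upwards [eventually_ge_atTop 1] with k hk
      have hkpos : (0:ℝ) < k := by exact_mod_cast hk
      have := log_fact_lower k hk
      have h3 : (Real.log k - 1) ≤ Real.log (k.factorial : ℝ) / k := by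
        rw [le_div_iff₀ hkpos]; linarith [this]
      linarith [h3]

    · filter_upwards [eventually_ge_atTop 1] with k hk
      have hkpos : (0:ℝ) < k := by exact_mod_cast hk
      have := log_fact_upper k hk
      have h3 : Real.log (k.factorial : ℝ) / k ≤ (1 + Real.log k)/k + (Real.log k - 1) := by
        rw [div_le_iff₀ hkpos]; rw [add_mul, div_mul_cancel₀ _ (ne_of_gt hkpos)]; linarith
      have h4 : (1 + Real.log k)/k = 1/k + Real.log k / k := by ring
      linarith [h3]
  have := h1.add ((tendsto_const_nhds (x := (2:ℝ))).mul h2)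
  simpa using this

lemma pow_rpow_inv (x : ℝ) (hx : 0 ≤ x) {k : ℕ} (hk : k ≠ 0) : ((x^k : ℝ)) ^ (1/(k:ℝ)) = x := by
  rw [← Real.rpow_natCast x k, ← Real.rpow_mul hx]
  rw [mul_one_div, div_self (by exact_mod_cast hk : (k:ℝ) ≠ 0), Real.rpow_one]

lemma tendsto_rpow1 (b : ℝ) (hb : 0 < b) :
    Tendsto (fun k : ℕ => b ^ (1/(k:ℝ))) atTop (nhds 1) := by
  have h1 : Tendsto (fun k : ℕ => Real.log b * (1/(k:ℝ))) atTop (nhds 0) := by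
    simpa [div_eq_mul_inv] using tendsto_const_div_atTop_nhds_zero_nat (Real.log b)
  have := (Real.continuous_exp.tendsto 0).comp h1
  rw [Real.exp_zero] at this
  apply this.congr
  intro k
  rw [Function.comp_apply, ← Real.rpow_def_of_pos hb]

lemma tendsto_k_rpow :
    Tendsto (fun k : ℕ => (k:ℝ) ^ (3/(2*(k:ℝ)))) atTop (nhds 1) := by
  have h1 : Tendsto (fun k : ℕ => Real.log k * (3/(2*(k:ℝ)))) atTop (nhds 0) := by
    have := tendsto_log_nat_div.mul (tendsto_const_nhds (x := (3/2 : ℝ)))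
    rw [zero_mul] at this
    apply this.congr'
    filter_upwards [eventually_ge_atTop 1] with k hk
    have hkpos : (0:ℝ) < k := by exact_mod_cast hk
    ring
  have := (Real.continuous_exp.tendsto 0).comp h1
  rw [Real.exp_zero] at this
  apply this.congr'
  filter_upwards [eventually_ge_atTop 1] with k hk
  have hkpos : (0:ℝ) < k := by exact_mod_cast hk
  rw [Function.comp_apply, ← Real.rpow_def_of_pos hkpos]

lemma tendsto_A (α : ℝ) (h0 : 0 < α) :
    Tendsto (fun k : ℕ => (α * (k.factorial:ℝ)^2) ^ (1/(k:ℝ)) * (Real.exp 1 / k)^2)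
      atTop (nhds 1) := by
  have h1 := tendsto_texp α h0
  have := (Real.continuous_exp.tendsto 0).comp h1
  rw [Real.exp_zero] at this
  apply this.congr'
  filter_upwards [eventually_ge_atTop 1] with k hk
  have hkpos : (0:ℝ) < k := by exact_mod_cast hk
  have hfpos : (0:ℝ) < (k.factorial : ℝ) := by exact_mod_cast k.factorial_pos
  have hprod : (0:ℝ) < α * (k.factorial:ℝ)^2 := by positivity
  rw [Function.comp_apply, Real.rpow_def_of_pos hprod]
  have hek : Real.exp 1 / (k:ℝ) = Real.exp (1 - Real.log k) := by
    rw [Real.exp_sub, Real.exp_log hkpos]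
  rw [hek, ← Real.exp_nat_mul, ← Real.exp_add]
  congr 1
  rw [Real.log_mul (ne_of_gt h0) (by positivity), Real.log_pow]
  push_cast
  field_simp
  ring


lemma pow_diff_le (a : ℝ) (ha : 1 ≤ a) : ∀ M : ℕ, a^(M+1) - (a-1)^(M+1) ≤ (M+1) * a^M := by
  intro M
  induction M with
  | zero => simp
  | succ M ih =>
    have h1 : (a-1)^(M+1) ≤ a^(M+1) := pow_le_pow_left₀ (by linarith) (by linarith) _
    have h2 : (0:ℝ) ≤ a^M := by positivity
    have h3 : (0:ℝ) ≤ a^(M+1) := by positivity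
    have hstep : a^(M+2) - (a-1)^(M+2) = a*(a^(M+1) - (a-1)^(M+1)) + (a-1)^(M+1) := by ring
    have h4 : a*(a^(M+1) - (a-1)^(M+1)) ≤ a*((M+1)*a^M) :=
      mul_le_mul_of_nonneg_left ih (by linarith)
    have h5 : a*((M+1)*a^M) = (M+1)*a^(M+1) := by ring
    push_cast
    nlinarith [h1, h4]


lemma count_bound (k n : ℕ) (α : ℝ) (h0 : 0 < α)
    (hP : ((n.choose k : ℝ)) ≤ α * (k.factorial : ℝ)) :
    (Nat.card {H : OrientedHypergraph k (Fin n) // IsTournament H ∧ PropertyO H} : ℝ)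
      ≤ α * (k.factorial : ℝ) ^ (n.choose k) := by
  have hc := count_main k n
  set N := n.choose k with hN
  have hb : (k.factorial - 1)^N ≤ k.factorial^N := Nat.pow_le_pow_left (Nat.sub_le _ _) _
  have hfc : (1:ℝ) ≤ (k.factorial : ℝ) := by exact_mod_cast k.factorial_pos
  have cast1 : ((k.factorial ^ N - (k.factorial - 1)^N : ℕ) : ℝ)
      = (k.factorial:ℝ)^N - ((k.factorial:ℝ) - 1)^N := by
    rw [Nat.cast_sub hb]
    push_cast [Nat.cast_sub k.factorial_pos]
    ring
  have hcr : (Nat.card {H : OrientedHypergraph k (Fin n) // IsTournament H ∧ PropertyO H} : ℝ)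
      ≤ (k.factorial:ℝ)^N - ((k.factorial:ℝ) - 1)^N := by
    rw [← cast1]; exact_mod_cast hc
  rcases N with _ | M
  · simpa using le_trans hcr (by norm_num; positivity)
  · have h2 := pow_diff_le (k.factorial : ℝ) hfc M
    have h3 : ((M:ℝ)+1) * (k.factorial:ℝ)^M ≤ (α * (k.factorial:ℝ)) * (k.factorial:ℝ)^M := by
      apply mul_le_mul_of_nonneg_right _ (by positivity)
      have : ((M:ℝ)+1) = ((M+1 : ℕ) : ℝ) := by push_cast; ring
      rw [this]
      exact hP
    calc (Nat.card _ : ℝ) ≤ (k.factorial:ℝ)^(M+1) - ((k.factorial:ℝ) - 1)^(M+1) := hcr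
      _ ≤ ((M:ℝ)+1) * (k.factorial:ℝ)^M := h2
      _ ≤ (α * (k.factorial:ℝ)) * (k.factorial:ℝ)^M := h3
      _ = α * (k.factorial:ℝ)^(M+1) := by ring

open scoped Classical in
noncomputable def nseq (α : ℝ) (k : ℕ) : ℕ :=
  max 1 (Nat.findGreatest (fun m => ((m.choose k : ℝ)) ≤ α * (k.factorial : ℝ)) (2*k*k))

lemma nseq_pos (α : ℝ) (k : ℕ) : 0 < nseq α k := lt_of_lt_of_le one_pos (le_max_left 1 _)

lemma nseq_facts (α : ℝ) (h0 : 0 < α) (h1 : α < 1) (k : ℕ) (hk : 2 ≤ k) :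
    (((nseq α k).choose k : ℝ) ≤ α * (k.factorial : ℝ)) ∧
    (α * ((k.factorial : ℝ))^2) ^ (1/(k:ℝ)) ≤ (nseq α k : ℝ) + 1 ∧
    (nseq α k : ℝ) ≤ (α * ((k.factorial : ℝ))^2) ^ (1/(k:ℝ)) + k := by
  classical
  set Q : ℕ → Prop := fun m => ((m.choose k : ℝ)) ≤ α * (k.factorial : ℝ) with hQdef
  set N := nseq α k with hNdef
  have hk0 : (k:ℕ) ≠ 0 := by omega
  have hkR : (0:ℝ) < k := by exact_mod_cast (by omega : 0 < k)
  have hfpos : (0:ℝ) < (k.factorial : ℝ) := by exact_mod_cast k.factorial_pos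
  have hQ1 : Q 1 := by
    show ((Nat.choose 1 k : ℕ) : ℝ) ≤ _
    rw [Nat.choose_eq_zero_of_lt (by omega)]
    push_cast
    positivity
  have hb1 : 1 ≤ 2*k*k := by nlinarith
  have h1le : 1 ≤ Nat.findGreatest Q (2*k*k) := Nat.le_findGreatest hb1 hQ1
  have hnk : N = Nat.findGreatest Q (2*k*k) := by
    rw [hNdef]
    show max 1 _ = _
    convert max_eq_right h1le using 2
  have hQn : Q N := by rw [hnk]; exact Nat.findGreatest_spec hb1 hQ1
  have hdesc : (N + 1 - k)^k ≤ N.descFactorial k := Nat.pow_sub_le_descFactorial _ _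
  have hdesc2 : N.descFactorial k = k.factorial * N.choose k :=
    Nat.descFactorial_eq_factorial_mul_choose _ _
  have hxk : (((N + 1 - k : ℕ) : ℝ))^k ≤ α * (k.factorial : ℝ)^2 := by
    have hcast : (((N + 1 - k : ℕ) : ℝ))^k ≤ (k.factorial : ℝ) * (N.choose k : ℝ) := by
      exact_mod_cast hdesc2 ▸ hdesc
    calc (((N + 1 - k : ℕ) : ℝ))^k ≤ (k.factorial : ℝ) * (N.choose k : ℝ) := hcast
      _ ≤ (k.factorial : ℝ) * (α * (k.factorial : ℝ)) :=
          mul_le_mul_of_nonneg_left hQn (by positivity)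
      _ = α * (k.factorial : ℝ)^2 := by ring
  have hxA : (((N + 1 - k : ℕ) : ℝ)) ≤ (α * ((k.factorial : ℝ))^2) ^ (1/(k:ℝ)) := by
    have := Real.rpow_le_rpow (by positivity : (0:ℝ) ≤ (((N + 1 - k : ℕ) : ℝ))^k)
      hxk (by positivity : (0:ℝ) ≤ 1/(k:ℝ))
    rwa [pow_rpow_inv _ (by positivity) hk0] at this
  have hub : (N : ℝ) ≤ (α * ((k.factorial : ℝ))^2) ^ (1/(k:ℝ)) + k := by
    have hApos : (0:ℝ) < (α * ((k.factorial : ℝ))^2) ^ (1/(k:ℝ)) :=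
      Real.rpow_pos_of_pos (by positivity) _
    rcases le_or_gt k (N + 1) with hcase | hcase
    · have : ((N + 1 - k : ℕ) : ℝ) = (N : ℝ) + 1 - k := by
        rw [Nat.cast_sub hcase]; push_cast; ring
      rw [this] at hxA; linarith
    · have : (N : ℝ) < k := by exact_mod_cast (by omega : N < k)
      linarith
  have hfle : (k.factorial : ℝ) ≤ ((k:ℝ))^k := by exact_mod_cast Nat.factorial_le_pow k
  have hA2 : (α * ((k.factorial : ℝ))^2) ^ (1/(k:ℝ)) ≤ ((k:ℝ))^2 := by
    have h5 : α * ((k.factorial : ℝ))^2 ≤ (((k:ℝ))^2)^k := by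
      calc α * ((k.factorial : ℝ))^2 ≤ 1 * ((k.factorial : ℝ))^2 := by
            apply mul_le_mul_of_nonneg_right (le_of_lt h1) (by positivity)
        _ = ((k.factorial : ℝ))^2 := by ring
        _ ≤ (((k:ℝ))^k)^2 := by
            apply pow_le_pow_left₀ (by positivity) hfle
        _ = (((k:ℝ))^2)^k := by ring
    have := Real.rpow_le_rpow (by positivity) h5 (by positivity : (0:ℝ) ≤ 1/(k:ℝ))
    rwa [pow_rpow_inv _ (by positivity) hk0] at this
  have hn2k : N + 1 ≤ 2*k*k := by
    have h6 : (N : ℝ) ≤ ((k*k + k : ℕ) : ℝ) := by push_cast; nlinarith [hub, hA2]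
    have h7 : N ≤ k*k + k := by exact_mod_cast h6
    nlinarith
  have hnotQ : ¬ Q (N + 1) := by
    apply Nat.findGreatest_is_greatest _ hn2k
    omega
  have hlb : (α * ((k.factorial : ℝ))^2) ^ (1/(k:ℝ)) ≤ (N : ℝ) + 1 := by
    have h8 : ¬ (((N + 1).choose k : ℝ) ≤ α * (k.factorial : ℝ)) := hnotQ
    push_neg at h8
    have h9 : (N + 1).choose k * k.factorial ≤ (N + 1)^k := by
      rw [mul_comm, ← Nat.descFactorial_eq_factorial_mul_choose]
      exact Nat.descFactorial_le_pow _ _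
    have h10 : α * (k.factorial : ℝ)^2 ≤ (((N + 1 : ℕ)):ℝ)^k := by
      have h11 : ((((N + 1).choose k) : ℝ)) * (k.factorial : ℝ) ≤ (((N + 1 : ℕ)):ℝ)^k := by
        exact_mod_cast h9
      have h12 : α * (k.factorial : ℝ)^2 ≤ ((((N + 1).choose k) : ℝ)) * (k.factorial : ℝ) := by
        nlinarith [h8, hfpos]
      linarith
    have := Real.rpow_le_rpow (by positivity) h10 (by positivity : (0:ℝ) ≤ 1/(k:ℝ))
    rw [pow_rpow_inv _ (by positivity) hk0] at this
    push_cast at this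
    linarith
  exact ⟨hQn, hlb, hub⟩

lemma tendsto_part (α : ℝ) (h0 : 0 < α) (h1 : α < 1) :
    Tendsto
      (fun k : ℕ => (nseq α k : ℝ) /
        ((2 * Real.pi / Real.exp (1 + Real.exp 1 ^ 2 / 2) * α) ^ (1 / (k : ℝ)) *
          ((k : ℝ) / Real.exp 1) ^ 2 * (k : ℝ) ^ (3 / (2 * (k : ℝ)))))
      atTop (nhds 1) := by
  have hc : (0:ℝ) < 2 * Real.pi / Real.exp (1 + Real.exp 1 ^ 2 / 2) := by
    have := Real.pi_pos
    positivity
  have hAtend := tendsto_A α h0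
  have hinv : Tendsto (fun k : ℕ => (Real.exp 1 / (k:ℝ))^2) atTop (nhds 0) := by
    have := (tendsto_const_div_atTop_nhds_zero_nat (Real.exp 1)).pow 2
    simpa using this
  have hek : Tendsto (fun k : ℕ => (k:ℝ) * (Real.exp 1 / (k:ℝ))^2) atTop (nhds 0) := by
    have h2 : Tendsto (fun k : ℕ => (Real.exp 1)^2 / (k:ℝ)) atTop (nhds 0) :=
      tendsto_const_div_atTop_nhds_zero_nat _
    apply h2.congr'
    filter_upwards [eventually_ge_atTop 1] with k hk
    have hkR : (0:ℝ) < k := by exact_mod_cast hk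
    field_simp
  have hmid : Tendsto (fun k : ℕ => (nseq α k : ℝ) * (Real.exp 1 / (k:ℝ))^2) atTop (nhds 1) := by
    apply tendsto_of_tendsto_of_tendsto_of_le_of_le'
      (g := fun k : ℕ => (α * ((k.factorial : ℝ))^2) ^ (1/(k:ℝ)) * (Real.exp 1 / (k:ℝ))^2
        - (Real.exp 1 / (k:ℝ))^2)
      (h := fun k : ℕ => (α * ((k.factorial : ℝ))^2) ^ (1/(k:ℝ)) * (Real.exp 1 / (k:ℝ))^2
        + (k:ℝ) * (Real.exp 1 / (k:ℝ))^2)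
    · simpa using hAtend.sub hinv
    · simpa using hAtend.add hek
    · filter_upwards [eventually_ge_atTop 2] with k hk
      have h := (nseq_facts α h0 h1 k hk).2.1
      have hnn : (0:ℝ) ≤ (Real.exp 1 / (k:ℝ))^2 := by positivity
      nlinarith [h, hnn]
    · filter_upwards [eventually_ge_atTop 2] with k hk
      have h := (nseq_facts α h0 h1 k hk).2.2
      have hnn : (0:ℝ) ≤ (Real.exp 1 / (k:ℝ))^2 := by positivity
      nlinarith [h, hnn]
  have hden : Tendsto (fun k : ℕ =>
      (2 * Real.pi / Real.exp (1 + Real.exp 1 ^ 2 / 2) * α) ^ (1/(k:ℝ)) *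
        (k:ℝ)^(3/(2*(k:ℝ)))) atTop (nhds 1) := by
    have := (tendsto_rpow1 (2 * Real.pi / Real.exp (1 + Real.exp 1 ^ 2 / 2) * α)
      (by positivity)).mul tendsto_k_rpow
    simpa using this
  have hfin := hmid.div hden one_ne_zero
  rw [div_one] at hfin
  apply hfin.congr'
  filter_upwards [eventually_ge_atTop 2] with k hk
  have hkR : (0:ℝ) < k := by exact_mod_cast (by omega : 0 < k)
  have hu : (0:ℝ) < (2 * Real.pi / Real.exp (1 + Real.exp 1 ^ 2 / 2) * α) ^ (1/(k:ℝ)) :=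
    Real.rpow_pos_of_pos (by positivity) _
  have hv : (0:ℝ) < (k:ℝ)^(3/(2*(k:ℝ))) := Real.rpow_pos_of_pos hkR _
  have he : (0:ℝ) < Real.exp 1 := Real.exp_pos 1
  simp only [Pi.div_apply]
  field_simp

/-- for every `0 < α < 1` there is a sequence of positive integers
`(n_k)` with `n_k / ((cα)^{1/k}·(k/e)²·k^{3/(2k)}) → 1`, where
`c = 2π/e^{1+e²/2}`, and a `k₀` such that for all `k ≥ k₀` the number of
`k`-tournaments on `n_k` vertices with Property O is at most `α·(k!)^{C(n_k,k)}`. -/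
theorem most_tournaments_fail_propertyO (α : ℝ) (h0 : 0 < α) (h1 : α < 1) :
    ∃ n : ℕ → ℕ, (∀ k, 0 < n k) ∧
      Filter.Tendsto
        (fun k : ℕ => (n k : ℝ) /
          ((2 * Real.pi / Real.exp (1 + Real.exp 1 ^ 2 / 2) * α) ^ (1 / (k : ℝ)) *
            ((k : ℝ) / Real.exp 1) ^ 2 * (k : ℝ) ^ (3 / (2 * (k : ℝ)))))
        Filter.atTop (nhds 1) ∧
      ∃ k₀ : ℕ, ∀ k : ℕ, k₀ ≤ k →
        (Nat.card {H : OrientedHypergraph k (Fin (n k)) //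
            IsTournament H ∧ PropertyO H} : ℝ)
          ≤ α * (k.factorial : ℝ) ^ (n k).choose k := by
  exact ⟨nseq α, nseq_pos α, tendsto_part α h0 h1,
    2, fun k hk => count_bound k (nseq α k) α h0 (nseq_facts α h0 h1 k hk).1⟩
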